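/- arXiv:cs/0608125 — 3 statements merged into one kernel-verified Lean document; each statement's English description precedes it below -/
import Mathlib

section
/- Equivalently in graph terms: if a finite directed graph with integer edge labels has no cycle of strictly positive total label, then there exists an assignment ω of natural numbers to vertices such that for every edge from α to β with label c, ω(α) + c ≤ ω(β). -/
open List

private theorem cost_bound {V : Type*} [Fintype V] (E : List (V × ℤ × V))
    (hnocyc : ∀ L : List (V × ℤ × V), L ≠ [] → (∀ e ∈ L, e ∈ E) →
      (∀ i : Fin L.length,
        (L.get i).2.2 = (L.get ⟨(i + 1) % L.length, Nat.mod_lt _ i.pos⟩).1) →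
      (L.map (fun e => e.2.1)).sum ≤ 0) :
    ∀ (n : ℕ) (L : List (V × ℤ × V)), L.length ≤ n → (∀ e ∈ L, e ∈ E) →
      L.Chain' (fun a b => a.2.2 = b.1) →
      (L.map (fun e => e.2.1)).sum ≤ (Fintype.card V) * (E.map (fun e => |e.2.1|)).sum := by
  have hC0 : (0:ℤ) ≤ (E.map (fun e => |e.2.1|)).sum := by
    refine List.sum_nonneg ?_
    rintro x hx; obtain ⟨y, -, rfl⟩ := mem_map.mp hx; exact abs_nonneg _
  intro n
  induction n with
  | zero =>
    intro L hlen _ _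
    have hL : L = [] := List.length_eq_zero_iff.mp (Nat.le_zero.mp hlen)
    subst hL
    simp only [map_nil, sum_nil]
    exact mul_nonneg (by positivity) hC0
  | succ n ih =>
    intro L hlen hE hchain
    have hCle : ∀ e ∈ L, e.2.1 ≤ (E.map (fun e => |e.2.1|)).sum := by
      intro e he
      refine le_trans (le_abs_self _) (List.single_le_sum ?_ _ (mem_map_of_mem (hE e he)))
      rintro x hx; obtain ⟨y, -, rfl⟩ := mem_map.mp hx; exact abs_nonneg _
    by_cases hlc : L.length ≤ Fintype.card V
    · calc (L.map (fun e => e.2.1)).sum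
          ≤ (L.map (fun e => e.2.1)).length • (E.map (fun e => |e.2.1|)).sum := by
            refine List.sum_le_card_nsmul _ _ ?_
            intro x hx; obtain ⟨e, he, rfl⟩ := mem_map.mp hx; exact hCle e he
        _ = (L.length : ℤ) * (E.map (fun e => |e.2.1|)).sum := by
            simp [nsmul_eq_mul]
        _ ≤ (Fintype.card V : ℤ) * (E.map (fun e => |e.2.1|)).sum :=
            mul_le_mul_of_nonneg_right (by exact_mod_cast hlc) hC0
    · push_neg at hlc
      have hLidx : ∀ (p q : ℕ) (hp : p < L.length) (hq : q < L.length), p = q →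
          L[p] = L[q] := by
        intro p q hp hq h; subst h; rfl
      have hcg : ∀ (m : ℕ) (h : m + 1 < L.length), L[m].2.2 = L[m+1].1 := by
        intro m h
        simpa using List.isChain_iff_getElem.mp hchain m (by omega)
      have key : ∀ a b : ℕ, ∀ (ha : a < L.length) (hb : b < L.length), a < b →
          (L[a]'ha).1 = (L[b]'hb).1 →
          (L.map (fun e => e.2.1)).sum ≤ (Fintype.card V) * (E.map (fun e => |e.2.1|)).sum := by
        intro a b ha hb hab hsrc
        have h1 : (L.drop a).take (b - a) ++ L.drop b = L.drop a := by
          have hd : L.drop b = (L.drop a).drop (b - a) := by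
            rw [drop_drop]; congr 1; omega
          rw [hd, take_append_drop]
        have hsplit : L = L.take a ++ ((L.drop a).take (b - a) ++ L.drop b) := by
          rw [h1, take_append_drop]
        have hlenCc : ((L.drop a).take (b - a)).length = b - a := by
          simp only [length_take, length_drop]; omega
        have hCcne : (L.drop a).take (b - a) ≠ [] := by
          intro h; rw [h] at hlenCc; simp only [length_nil] at hlenCc; omega
        have hgetCc : ∀ (k : ℕ) (hk : k < ((L.drop a).take (b - a)).length),
            ((L.drop a).take (b - a))[k] = L[a + k]'(by omega) := by
          intro k hk
          rw [List.getElem_take, List.getElem_drop]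
        have hcyc : ∀ k : Fin ((L.drop a).take (b - a)).length,
            (((L.drop a).take (b - a)).get k).2.2 =
            (((L.drop a).take (b - a)).get ⟨((k:ℕ) + 1) % ((L.drop a).take (b - a)).length,
              Nat.mod_lt _ k.pos⟩).1 := by
          intro k
          obtain ⟨kv, hkv⟩ := k
          have hk : kv < b - a := by omega
          simp only [List.get_eq_getElem, Fin.val_mk]
          rw [hgetCc kv hkv, hgetCc _ (Nat.mod_lt _ (Fin.pos ⟨kv, hkv⟩))]
          by_cases hk1 : kv + 1 < b - a
          · have hm : a + (kv + 1) % ((L.drop a).take (b - a)).length = (a + kv) + 1 := by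
              rw [hlenCc, Nat.mod_eq_of_lt hk1]; omega
            have e := hLidx ((a + kv) + 1) (a + (kv + 1) % ((L.drop a).take (b - a)).length)
              (by omega) (by omega) hm.symm
            exact (hcg (a + kv) (by omega)).trans (congrArg Prod.fst e)
          · have hm : a + (kv + 1) % ((L.drop a).take (b - a)).length = a := by
              rw [hlenCc, show kv + 1 = b - a from by omega, Nat.mod_self]; omega
            have e2 := hLidx ((a + kv) + 1) b (by omega) hb (by omega)
            have e3 := hLidx (a + (kv + 1) % ((L.drop a).take (b - a)).length) a
              (by omega) ha hm
            exact ((hcg (a + kv) (by omega)).trans (congrArg Prod.fst e2)).trans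
              (hsrc.symm.trans (congrArg Prod.fst e3.symm))
        have hmemCc : ∀ e ∈ (L.drop a).take (b - a), e ∈ E := fun e he =>
          hE e (mem_of_mem_drop (mem_of_mem_take he))
        have hCcost := hnocyc _ hCcne hmemCc hcyc
        have hchain2 : Chain' (fun x y => x.2.2 = y.1)
            (L.take a ++ ((L.drop a).take (b - a) ++ L.drop b)) := by
          rw [← hsplit]; exact hchain
        obtain ⟨hchA, hchCD, hlink1⟩ := isChain_append.mp hchain2
        obtain ⟨hchCc, hchD, hlink2⟩ := isChain_append.mp hchCD
        have hheadCc : ((L.drop a).take (b - a)).head? = some (L[a]'ha) := by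
          rw [head?_eq_head hCcne, head_eq_getElem, hgetCc 0 (by omega)]
          exact congrArg some (hLidx (a + 0) a (by omega) ha (by omega))
        have hheadD : (L.drop b).head? = some (L[b]'hb) := by
          rw [head?_drop, getElem?_eq_getElem hb]
        have hchAD : Chain' (fun x y => x.2.2 = y.1) (L.take a ++ L.drop b) := by
          refine isChain_append.mpr ⟨hchA, hchD, ?_⟩
          intro x hx y hy
          have hx2 : x.2.2 = (L[a]'ha).1 := by
            refine hlink1 x hx _ ?_
            rw [head?_append, hheadCc]; rfl
          rw [hheadD] at hy
          simp only [Option.mem_def, Option.some.injEq] at hy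
          subst hy
          rw [hx2, hsrc]
        have hlenAD : (L.take a ++ L.drop b).length ≤ n := by
          simp only [length_append, length_take, length_drop]
          omega
        have hmemAD : ∀ e ∈ L.take a ++ L.drop b, e ∈ E := by
          intro e he
          rcases mem_append.mp he with h | h
          · exact hE e (mem_of_mem_take h)
          · exact hE e (mem_of_mem_drop h)
        have hih := ih (L.take a ++ L.drop b) hlenAD hmemAD hchAD
        have hsum : (L.map (fun e => e.2.1)).sum
            = ((L.take a ++ L.drop b).map (fun e => e.2.1)).sum
              + (((L.drop a).take (b - a)).map (fun e => e.2.1)).sum := by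
          conv_lhs => rw [hsplit]
          simp only [map_append, sum_append]
          ring
        rw [hsum]
        linarith
      obtain ⟨i, j, hne, hij⟩ := Fintype.exists_ne_map_eq_of_card_lt
        (fun i : Fin L.length => (L.get i).1) (by simpa using hlc)
      simp only [List.get_eq_getElem] at hij
      rcases Ne.lt_or_gt hne with h | h
      · exact key i j i.2 j.2 h hij
      · exact key j i j.2 i.2 h hij.symm

/-- If a finite directed graph with integer edge labels (edges given as a list
of triples (source, label, target)) has no cycle of strictly positive total
cost, then there is an assignment ω of natural numbers to vertices such that
ω(α) + c ≤ ω(β) for every edge α →^c β. -/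
theorem potential_exists {V : Type*} [Fintype V]
    (E : List (V × ℤ × V))
    (hnocyc : ∀ L : List (V × ℤ × V), L ≠ [] → (∀ e ∈ L, e ∈ E) →
      (∀ i : Fin L.length,
        (L.get i).2.2 = (L.get ⟨(i + 1) % L.length, Nat.mod_lt _ i.pos⟩).1) →
      (L.map (fun e => e.2.1)).sum ≤ 0) :
    ∃ ω : V → ℕ, ∀ e ∈ E, (ω e.1 : ℤ) + e.2.1 ≤ ω e.2.2 := by
  classical
  set S : V → Set ℤ := fun v => {c | ∃ L : List (V × ℤ × V), (∀ e ∈ L, e ∈ E) ∧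
    L.Chain' (fun a b => a.2.2 = b.1) ∧ (∀ x ∈ L.getLast?, x.2.2 = v) ∧
    (L.map (fun e => e.2.1)).sum = c} with hS
  have h0 : ∀ v, (0:ℤ) ∈ S v := by
    intro v; exact ⟨[], by simp, List.isChain_nil, by simp, by simp⟩
  have hbdd : ∀ v, BddAbove (S v) := by
    intro v
    refine ⟨(Fintype.card V) * (E.map (fun e => |e.2.1|)).sum, ?_⟩
    rintro c ⟨L, h1, h2, -, rfl⟩
    exact cost_bound E hnocyc L.length L le_rfl h1 h2
  set ω' : V → ℤ := fun v => sSup (S v) with hω'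
  have hω0 : ∀ v, 0 ≤ ω' v := fun v => le_csSup (hbdd v) (h0 v)
  have hedge : ∀ e ∈ E, ω' e.1 + e.2.1 ≤ ω' e.2.2 := by
    intro e he
    have hstep : ∀ c ∈ S e.1, c + e.2.1 ∈ S e.2.2 := by
      rintro c ⟨L, h1, h2, h3, rfl⟩
      refine ⟨L ++ [e], ?_, ?_, ?_, by simp⟩
      · intro x hx
        rcases mem_append.mp hx with h | h
        · exact h1 x h
        · simp only [mem_singleton] at h; subst h; exact he
      · refine isChain_append.mpr ⟨h2, isChain_singleton _, ?_⟩
        intro x hx y hy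
        simp only [head?_cons, Option.mem_def, Option.some.injEq] at hy
        subst hy
        exact h3 x hx
      · intro x hx
        rw [getLast?_concat] at hx
        simp only [Option.mem_def, Option.some.injEq] at hx
        subst hx; rfl
    have hle : ω' e.1 ≤ ω' e.2.2 - e.2.1 := by
      refine csSup_le ⟨0, h0 _⟩ ?_
      intro c hc
      have := le_csSup (hbdd e.2.2) (hstep c hc)
      linarith
    linarith
  refine ⟨fun v => (ω' v).toNat, ?_⟩
  intro e he
  have h1 := hedge e he
  calc ((ω' e.1).toNat : ℤ) + e.2.1 = ω' e.1 + e.2.1 := by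
        rw [Int.toNat_of_nonneg (hω0 _)]
    _ ≤ ω' e.2.2 := h1
    _ = ((ω' e.2.2).toNat : ℤ) := (Int.toNat_of_nonneg (hω0 _)).symm
end

section
/- If N is a square rational matrix in which every row is either the zero vector, ±e^j (a signed unit vector), or e^j − e^k with j ≠ k, then det(N) ∈ {0, 1, −1}. -/
def GoodRow {m : ℕ} (v : Fin m → ℚ) : Prop :=
  v = 0 ∨ (∃ j, v = Pi.single j (1 : ℚ)) ∨ (∃ j, v = Pi.single j (-1 : ℚ)) ∨
    (∃ j k, j ≠ k ∧ v = Pi.single j (1 : ℚ) + Pi.single k (-1 : ℚ))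

lemma single_comp {m : ℕ} (p b : Fin (m + 1)) (c : ℚ) :
    (Pi.single b c ∘ p.succAbove = 0 ∧ b = p) ∨
      ∃ a, p.succAbove a = b ∧ Pi.single b c ∘ p.succAbove = Pi.single a c := by
  by_cases hb : b = p
  · refine Or.inl ⟨?_, hb⟩
    funext x
    have : p.succAbove x ≠ b := hb ▸ Fin.succAbove_ne p x
    simp [Pi.single_apply, this.symm]
  · obtain ⟨a, ha⟩ := Fin.exists_succAbove_eq hb
    refine Or.inr ⟨a, ha, ?_⟩
    funext x
    simp [Pi.single_apply, ← ha, Fin.succAbove_right_injective.eq_iff]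

lemma good_comp {m : ℕ} {v : Fin (m + 1) → ℚ} (hv : GoodRow v) (p : Fin (m + 1)) :
    GoodRow (v ∘ p.succAbove) := by
  rcases hv with h | ⟨j, h⟩ | ⟨j, h⟩ | ⟨j, k, hjk, h⟩
  · subst h; exact Or.inl rfl
  · subst h
    rcases single_comp p j 1 with ⟨h0, _⟩ | ⟨a, _, ha⟩
    · exact Or.inl h0
    · exact Or.inr (Or.inl ⟨a, ha⟩)
  · subst h
    rcases single_comp p j (-1) with ⟨h0, _⟩ | ⟨a, _, ha⟩
    · exact Or.inl h0
    · exact Or.inr (Or.inr (Or.inl ⟨a, ha⟩))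
  · subst h
    have hsum : (Pi.single j (1:ℚ) + Pi.single k (-1:ℚ)) ∘ p.succAbove =
        (Pi.single j (1:ℚ) ∘ p.succAbove) + (Pi.single k (-1:ℚ) ∘ p.succAbove) := rfl
    rcases single_comp p j 1 with ⟨h1, hj⟩ | ⟨a, haj, ha⟩ <;>
      rcases single_comp p k (-1) with ⟨h2, hk⟩ | ⟨b, hbk, hb⟩
    · exact absurd (hj.trans hk.symm) hjk
    · refine Or.inr (Or.inr (Or.inl ⟨b, ?_⟩))
      rw [hsum, h1, hb, zero_add]
    · refine Or.inr (Or.inl ⟨a, ?_⟩)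
      rw [hsum, h2, ha, add_zero]
    · refine Or.inr (Or.inr (Or.inr ⟨a, b, ?_, ?_⟩))
      · rintro rfl; exact hjk (haj ▸ hbk ▸ rfl)
      · rw [hsum, ha, hb]

lemma good_det : ∀ (n : ℕ) (N : Matrix (Fin n) (Fin n) ℚ), (∀ i, GoodRow (N i)) →
    N.det = 0 ∨ N.det = 1 ∨ N.det = -1 := by
  intro n
  induction n with
  | zero => intro N _; simp [Matrix.det_fin_zero]
  | succ n ih =>
    intro N hrow
    by_cases hA : ∃ i j c, (c = (1:ℚ) ∨ c = -1) ∧ N i = Pi.single j c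
    · obtain ⟨i, j, c, hc, hN⟩ := hA
      have hdet := Matrix.det_succ_row N i
      have hterm : ∀ j' : Fin (n+1), j' ≠ j →
          (-1 : ℚ) ^ ((i : ℕ) + (j' : ℕ)) * N i j' *
            (N.submatrix i.succAbove j'.succAbove).det = 0 := by
        intro j' hj'
        have : N i j' = 0 := by rw [hN]; simp [Pi.single_apply, hj']
        rw [this]; ring
      rw [Finset.sum_eq_single j (fun j' _ h => hterm j' h) (by simp)] at hdet
      have hminor : ∀ i', GoodRow ((N.submatrix i.succAbove j.succAbove) i') := by
        intro i'
        exact good_comp (hrow (i.succAbove i')) j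
      have hd := ih _ hminor
      have hNij : N i j = c := by rw [hN]; simp
      have hsign : (-1 : ℚ) ^ ((i : ℕ) + (j : ℕ)) = 1 ∨
          (-1 : ℚ) ^ ((i : ℕ) + (j : ℕ)) = -1 := neg_one_pow_eq_or ℚ _
      rw [hdet, hNij]
      rcases hsign with hs | hs <;> rw [hs] <;>
        rcases hc with rfl | rfl <;>
        rcases hd with h | h | h <;> rw [h] <;> norm_num
    · -- every row is 0 or a difference row; row sums are 0
      push_neg at hA
      have hsum : ∀ i, ∑ j, N i j = 0 := by
        intro i
        rcases hrow i with h | ⟨j, h⟩ | ⟨j, h⟩ | ⟨j, k, hjk, h⟩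
        · simp [h]
        · exact absurd h (hA i j 1 (Or.inl rfl))
        · exact absurd h (hA i j (-1) (Or.inr rfl))
        · rw [h]
          simp [Finset.sum_add_distrib, Finset.sum_pi_single]
      have : N.det = 0 := by
        rw [← Matrix.exists_mulVec_eq_zero_iff]
        refine ⟨fun _ => 1, ?_, ?_⟩
        · intro h
          have := congrFun h 0
          simp at this
        · funext i
          simp [Matrix.mulVec, dotProduct, hsum i]
      exact Or.inl this

/-- If every row of a square rational matrix is 0, ±e^j, or e^j − e^k (j ≠ k),
then its determinant is 0, 1 or −1. -/
theorem det_zero_one_neg_one {n : ℕ} (N : Matrix (Fin n) (Fin n) ℚ)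
    (hrow : ∀ i, N i = 0 ∨
      (∃ j, N i = Pi.single j (1 : ℚ)) ∨
      (∃ j, N i = Pi.single j (-1 : ℚ)) ∨
      (∃ j k, j ≠ k ∧ N i = Pi.single j (1 : ℚ) + Pi.single k (-1 : ℚ))) :
    N.det = 0 ∨ N.det = 1 ∨ N.det = -1 :=
  good_det n N hrow
end

section
/- Let P' = {z ∈ ℤ^n | Mz ≤ v, z ≥ 0} where each row of M has exactly one +1 and one −1 entry and zeros elsewhere. If P' is nonempty, then P' has a unique smallest element z*: z* ∈ P' and z* ≤ z componentwise for all z ∈ P'. -/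
/-- If the set P' of nonnegative integer solutions of Mz ≤ v (every row of M
having exactly one +1, one −1 and zeros elsewhere) is nonempty, then it has a
unique smallest element. -/
theorem smallest_integer_solution {K n : ℕ}
    (M : Matrix (Fin K) (Fin n) ℤ) (v : Fin K → ℤ)
    (hrow : ∀ i, ∃ a b : Fin n, a ≠ b ∧ M i a = 1 ∧ M i b = -1 ∧
      ∀ l, l ≠ a → l ≠ b → M i l = 0)
    (hne : ∃ z : Fin n → ℤ, M.mulVec z ≤ v ∧ 0 ≤ z) :
    ∃! zs : Fin n → ℤ, (M.mulVec zs ≤ v ∧ 0 ≤ zs) ∧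
      ∀ z : Fin n → ℤ, M.mulVec z ≤ v ∧ 0 ≤ z → zs ≤ z := by
  classical
  -- evaluation of a row with one +1 (at a) and one -1 (at b)
  have heval : ∀ (i : Fin K) (a b : Fin n), a ≠ b → M i a = 1 → M i b = -1 →
      (∀ l, l ≠ a → l ≠ b → M i l = 0) →
      ∀ z : Fin n → ℤ, M.mulVec z i = z a - z b := by
    intro i a b hab ha hb h0 z
    have : ∀ j, M i j * z j =
        (if j = a then z a else 0) + (if j = b then -(z b) else 0) := by
      intro j
      by_cases hja : j = a
      · subst hja
        simp [ha, if_neg hab]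
      · by_cases hjb : j = b
        · subst hjb
          simp [hb, hja]
        · simp [h0 j hja hjb, hja, hjb]
    simp only [Matrix.mulVec, dotProduct, this, Finset.sum_add_distrib,
      Finset.sum_ite_eq', Finset.mem_univ, if_true]
    ring
  -- solution set closed under componentwise min
  have hmin : ∀ z w : Fin n → ℤ, (M.mulVec z ≤ v ∧ 0 ≤ z) →
      (M.mulVec w ≤ v ∧ 0 ≤ w) →
      (M.mulVec (fun j => min (z j) (w j)) ≤ v ∧ 0 ≤ fun j => min (z j) (w j)) := by
    intro z w hz hw
    constructor
    · intro i
      obtain ⟨a, b, hab, ha, hb, h0⟩ := hrow i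
      rw [heval i a b hab ha hb h0]
      have hz' := hz.1 i
      have hw' := hw.1 i
      rw [heval i a b hab ha hb h0] at hz' hw'
      rcases le_total (z b) (w b) with h | h
      · have hmb : min (z b) (w b) = z b := min_eq_left h
        have hma : min (z a) (w a) ≤ z a := min_le_left _ _
        rw [hmb]
        linarith
      · have hmb : min (z b) (w b) = w b := min_eq_right h
        have hma : min (z a) (w a) ≤ w a := min_le_right _ _
        rw [hmb]
        linarith
    · intro j
      exact le_min (hz.2 j) (hw.2 j)
  obtain ⟨z0, hz0⟩ := hne
  -- for each coordinate j, the least attained value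
  have hleast : ∀ j : Fin n, ∃ m : ℤ,
      (∃ z : Fin n → ℤ, (M.mulVec z ≤ v ∧ 0 ≤ z) ∧ z j = m) ∧
      ∀ t : ℤ, (∃ z : Fin n → ℤ, (M.mulVec z ≤ v ∧ 0 ≤ z) ∧ z j = t) → m ≤ t := by
    intro j
    have := Int.exists_least_of_bdd
      (P := fun t => ∃ z : Fin n → ℤ, (M.mulVec z ≤ v ∧ 0 ≤ z) ∧ z j = t)
      ⟨0, by rintro t ⟨z, hz, rfl⟩; exact hz.2 j⟩ ⟨z0 j, z0, hz0, rfl⟩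
    obtain ⟨m, hm, hle⟩ := this
    exact ⟨m, hm, hle⟩
  choose m hm hmle using hleast
  choose w hw hwj using hm
  refine ⟨m, ⟨⟨?_, ?_⟩, ?_⟩, ?_⟩
  · -- m satisfies the constraints
    intro i
    obtain ⟨a, b, hab, ha, hb, h0⟩ := hrow i
    rw [heval i a b hab ha hb h0]
    -- u := min (w a) (w b) is a solution with u b = m b and u a ≥ m a
    have hu := hmin (w a) (w b) (hw a) (hw b)
    have hub : min (w a b) (w b b) = m b := by
      have h1 : m b ≤ w a b := hmle b _ ⟨w a, hw a, rfl⟩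
      have h2 : w b b = m b := hwj b
      omega
    have hua : m a ≤ min (w a a) (w b a) := hmle a _ ⟨_, hu, rfl⟩
    have h3 : min (w a a) (w b a) - min (w a b) (w b b) ≤ v i := by
      have := hu.1 i
      rwa [heval i a b hab ha hb h0] at this
    rw [hub] at h3; linarith
  · intro j
    have := hw j |>.2 j
    rw [hwj j] at this
    exact this
  · intro z hz j
    exact hmle j _ ⟨z, hz, rfl⟩
  · intro y ⟨hy, hymin⟩
    funext j
    have h1 : y j ≤ m j := by
      have := hymin m ?_ j
      · exact this
      constructor
      · intro i
        obtain ⟨a, b, hab, ha, hb, h0⟩ := hrow i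
        rw [heval i a b hab ha hb h0]
        have hu := hmin (w a) (w b) (hw a) (hw b)
        have hub : min (w a b) (w b b) = m b := by
          have h1 : m b ≤ w a b := hmle b _ ⟨w a, hw a, rfl⟩
          have h2 : w b b = m b := hwj b
          omega
        have hua : m a ≤ min (w a a) (w b a) := hmle a _ ⟨_, hu, rfl⟩
        have h3 : min (w a a) (w b a) - min (w a b) (w b b) ≤ v i := by
          have := hu.1 i
          rwa [heval i a b hab ha hb h0] at this
        rw [hub] at h3; linarith
      · intro j
        have := hw j |>.2 j
        rw [hwj j] at this
        exact this
    have h2 : m j ≤ y j := hmle j _ ⟨y, hy, rfl⟩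
    omega
end
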